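/- (Theorem 2, first claim: asymptotic optimality of the CIR threshold.) For each n ≥ 1, let (X_1, Y_1), …, (X_n, Y_n), (X, Y) be i.i.d. random pairs with values in ℝ^d × ℝ, and let F(y | x) denote a regular conditional cumulative distribution function of Y given X = x. Let ρ_n ∈ (0,1) with ρ_n → 0, set T_n = ⌈ρ_n^{−1}⌉, and fix measurable functions q̂_0, …, q̂_{T_n} : ℝ^d → ℝ with q̂_0(x) ≤ … ≤ q̂_{T_n}(x) for all x, satisfying the consistency condition max_{0 ≤ t ≤ T_n} E[(t/T_n − F(q̂_t(X) | X))²] ≤ ρ_n². Fix measurable functions l_k : ℝ^d → {0, …, T_n − k}, k = 1, …, T_n, such that q̂_{l_k(x)+k}(x) − q̂_{l_k(x)}(x) = min_{0 ≤ l ≤ T_n − k} (q̂_{l+k}(x) − q̂_l(x)), define C_k(x) = (q̂_{l_k(x)}(x), q̂_{l_k(x)+k}(x)], and assume the nestedness (unimodality) condition C_k(x) ⊆ C_{k+1}(x) for all 1 ≤ k < T_n and all x. Let α ∈ (0,1), let k_i = min{k : Y_i ∈ C_k(X_i)} (with k_i = T_n if Y_i ∉ C_{T_n}(X_i)), and let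 k̂_n be the ⌈(1−α)(n+1)⌉-th smallest value among k_1, …, k_n. Then k̂_n / T_n converges in probability to 1 − α: for every ε > 0, lim_{n→∞} P[|k̂_n / T_n − (1 − α)| > ε] = 0. -/

import Mathlib

open MeasureTheory ProbabilityTheory Filter

/-- The `r`-th smallest value (1-indexed `r`-th order statistic) of a list:
the `r`-th entry of the list sorted in nondecreasing order. -/
noncomputable def orderStat {α : Type*} [LinearOrder α] [Inhabited α]
    (r : ℕ) (l : List α) : α :=
  (l.insertionSort (· ≤ ·)).getD (r - 1) default

lemma sorted_getD_le_iff {s : List ℕ} (hs : List.Pairwise (· ≤ ·) s) {r : ℕ}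
    (hr1 : 1 ≤ r) (hrn : r ≤ s.length) (c : ℕ) :
    s.getD (r - 1) default ≤ c ↔ r ≤ s.countP (fun a => a ≤ c) := by
  have hlt : r - 1 < s.length := by omega
  rw [List.getD_eq_getElem s default hlt]
  have hpair := List.pairwise_iff_getElem.mp hs
  constructor
  · intro h
    have h1 : s.countP (fun a => a ≤ c) =
        (s.take r).countP (fun a => a ≤ c) + (s.drop r).countP (fun a => a ≤ c) := by
      rw [← List.countP_append, List.take_append_drop]
    have h2 : (s.take r).countP (fun a => a ≤ c) = (s.take r).length := by
      rw [List.countP_eq_length]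
      intro a ha
      obtain ⟨i, hi, rfl⟩ := List.mem_iff_getElem.mp ha
      have hi' : i < r := lt_of_lt_of_le hi (by simpa using List.length_take_le r s)
      rw [List.getElem_take]
      simp only [decide_eq_true_eq]
      rcases lt_or_eq_of_le (Nat.le_sub_one_of_lt hi') with h' | h'
      · exact le_trans (hpair _ _ _ _ h') h
      · subst h'; exact h
    have h3 : (s.take r).length = r := by simp [Nat.min_eq_left hrn]
    omega
  · intro h
    by_contra hc
    push_neg at hc
    have h1 : s.countP (fun a => a ≤ c) =
        (s.take (r-1)).countP (fun a => a ≤ c) + (s.drop (r-1)).countP (fun a => a ≤ c) := by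
      rw [← List.countP_append, List.take_append_drop]
    have h2 : (s.drop (r-1)).countP (fun a => a ≤ c) = 0 := by
      rw [List.countP_eq_zero]
      intro a ha
      obtain ⟨i, hi, rfl⟩ := List.mem_iff_getElem.mp ha
      rw [List.getElem_drop]
      simp only [decide_eq_true_eq, not_le]
      rcases Nat.eq_zero_or_pos i with h' | h'
      · subst h'; simpa using hc
      · have hb : r - 1 + i < s.length := by
          have h5 := hi; simp only [List.length_drop] at h5; omega
        exact lt_of_lt_of_le hc (hpair (r-1) (r-1+i) (by omega) hb (by omega))
    have h3 : (s.take (r-1)).countP (fun a => a ≤ c) ≤ r - 1 :=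
      le_trans List.countP_le_length (List.length_take_le _ _)
    omega

lemma orderStat_le_iff {L : List ℕ} {r : ℕ} (hr1 : 1 ≤ r) (hrn : r ≤ L.length) (c : ℕ) :
    orderStat r L ≤ c ↔ r ≤ L.countP (fun a => a ≤ c) := by
  have hperm : (L.insertionSort (· ≤ ·)).Perm L := L.perm_insertionSort (· ≤ ·)
  rw [orderStat, sorted_getD_le_iff (List.pairwise_insertionSort _ L) hr1
    (by rwa [hperm.length_eq]), hperm.countP_eq]

lemma orderStat_le_of_forall {L : List ℕ} {r c : ℕ} (hc : ∀ a ∈ L, a ≤ c) :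
    orderStat r L ≤ c := by
  rw [orderStat]
  rcases lt_or_ge (r - 1) (L.insertionSort (· ≤ ·)).length with h | h
  · rw [List.getD_eq_getElem _ default h]
    exact hc _ ((L.perm_insertionSort (· ≤ ·)).mem_iff.mp (List.getElem_mem h))
  · rw [List.getD_eq_default _ default h]; exact Nat.zero_le c

lemma le_orderStat_of_forall {L : List ℕ} {r c : ℕ} (hr1 : 1 ≤ r) (hrn : r ≤ L.length)
    (hc : ∀ a ∈ L, c ≤ a) : c ≤ orderStat r L := by
  rw [orderStat]
  have h : r - 1 < (L.insertionSort (· ≤ ·)).length := by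
    rw [(L.perm_insertionSort (· ≤ ·)).length_eq]; omega
  rw [List.getD_eq_getElem _ default h]
  exact hc _ ((L.perm_insertionSort (· ≤ ·)).mem_iff.mp (List.getElem_mem h))

lemma countP_ofFn {n : ℕ} (f : Fin n → ℕ) (p : ℕ → Bool) :
    (List.ofFn f).countP p = ∑ i : Fin n, if p (f i) then 1 else 0 := by
  induction n with
  | zero => simp
  | succ m ih =>
    rw [List.ofFn_succ, List.countP_cons, Fin.sum_univ_succ, ih]
    ring

lemma measurable_comp_nat {β : Type*} [MeasurableSpace β] {f : β → ℕ} (hf : Measurable f)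
    {g : ℕ → β → ℝ} {m : ℕ} (hg : ∀ j, j ≤ m → Measurable (g j)) (hfm : ∀ x, f x ≤ m) :
    Measurable fun x => g (f x) x := by
  intro t ht
  have heq : (fun x => g (f x) x) ⁻¹' t
      = ⋃ j ∈ Set.Iic m, ({x | f x = j} ∩ g j ⁻¹' t) := by
    ext x
    simp only [Set.mem_preimage, Set.mem_iUnion, Set.mem_inter_iff, Set.mem_setOf_eq,
      Set.mem_Iic]
    constructor
    · intro hx; exact ⟨f x, hfm x, rfl, hx⟩
    · rintro ⟨j, hj, rfl, hx⟩; exact hx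
  rw [heq]
  exact MeasurableSet.biUnion (Set.to_countable _)
    (fun j hj => (hf (measurableSet_singleton j)).inter (hg j hj ht))

lemma measurable_condCDF_comp {γ : Type*} [MeasurableSpace γ]
    (μ : Measure (γ × ℝ)) [IsFiniteMeasure μ] {g : γ → ℝ} (hg : Measurable g) :
    Measurable fun x => condCDF μ x (g x) := by
  have key : ∀ x, condCDF μ x (g x)
      = ⨅ r : ℚ, if g x < (r : ℝ) then condCDF μ x r else 1 := by
    intro x
    have h0 := (condCDF μ x).iInf_rat_gt_eq (g x)
    have hbdd : BddBelow (Set.range fun r : ℚ => if g x < (r : ℝ) then condCDF μ x r else 1) := by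
      refine ⟨0, ?_⟩
      rintro y ⟨r, rfl⟩
      dsimp only
      split_ifs
      · exact condCDF_nonneg μ x r
      · exact zero_le_one
    have hne : Nonempty {r' : ℚ // g x < (r' : ℝ)} := by
      obtain ⟨r, hr⟩ := exists_rat_gt (g x)
      exact ⟨⟨r, hr⟩⟩
    refine le_antisymm ?_ ?_
    · refine le_ciInf fun r => ?_
      split_ifs with h
      · exact (condCDF μ x).mono (le_of_lt h)
      · exact condCDF_le_one μ x _
    · rw [← h0]
      refine le_ciInf fun r => ?_
      have heq : (if g x < ((r : ℚ) : ℝ) then condCDF μ x r else 1) = condCDF μ x (r : ℚ) :=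
        if_pos r.2
      exact le_trans (ciInf_le hbdd (r : ℚ)) (le_of_eq heq)
  have : (fun x => condCDF μ x (g x))
      = fun x => ⨅ r : ℚ, if g x < (r : ℝ) then condCDF μ x r else 1 := funext key
  rw [this]
  exact Measurable.iInf fun r => Measurable.ite
    (measurableSet_lt hg measurable_const) (measurable_condCDF μ r) measurable_const

lemma measure_eq_lintegral_condCDF {γ : Type*} [MeasurableSpace γ]
    (μ : Measure (γ × ℝ)) [IsFiniteMeasure μ] {s : Set (γ × ℝ)} (hs : MeasurableSet s) :
    μ s = ∫⁻ x, (condCDF μ x).measure {y | (x, y) ∈ s} ∂μ.fst := by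
  have h := lintegral_toKernel_mem (isCondKernelCDF_condCDF μ) () hs
  simp only [Kernel.const_apply, IsCondKernelCDF.toKernel_apply] at h
  exact h.symm

lemma binom_concentration {Ω : Type*} [MeasurableSpace Ω] (P : Measure Ω) [IsProbabilityMeasure P]
    {n : ℕ} {B : Fin n → Ω → ℝ} (hBmeas : ∀ i, Measurable (B i))
    (hval : ∀ i ω, B i ω = 0 ∨ B i ω = 1)
    (hpair : Set.Pairwise Set.univ (fun i j => IndepFun (B i) (B j) P))
    {p : ℝ} (hp : ∀ i, ∫ ω, B i ω ∂P = p)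
    {a : ℝ} (ha : 0 < a) :
    P {ω | a ≤ |(∑ i, B i ω) - n * p|} ≤ ENNReal.ofReal (n / a ^ 2) := by
  have hB01 : ∀ i ω, ‖B i ω‖ ≤ 1 := by
    intro i ω; rcases hval i ω with h | h <;> simp [h]
  have hmem : ∀ i, MemLp (B i) 2 P := fun i =>
    (memLp_top_of_bound (hBmeas i).aestronglyMeasurable 1
      (Filter.Eventually.of_forall (hB01 i))).mono_exponent le_top
  have hmemS : MemLp (∑ i, B i) 2 P := memLp_finsetSum' _ fun i _ => hmem i
  have hsq : ∀ i, (fun ω => B i ω ^ 2) = B i := by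
    intro i; funext ω; rcases hval i ω with h | h <;> simp [h]
  have hvar : ∀ i, variance (B i) P ≤ 1 := by
    intro i
    have h1 : variance (B i) P = (∫ ω, B i ω ^ 2 ∂P) - (∫ ω, B i ω ∂P) ^ 2 := by
      rw [variance_eq_sub (hmem i)]
      congr 1
    rw [h1, hsq i, hp i]
    have hple : p ≤ 1 := by
      rw [← hp i]
      calc ∫ ω, B i ω ∂P ≤ ∫ _, (1 : ℝ) ∂P := by
            refine integral_mono ((hmem i).integrable one_le_two) (integrable_const 1) ?_
            intro ω; rcases hval i ω with h | h <;> simp [h]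
        _ = 1 := by simp
    nlinarith [sq_nonneg p]
  have hvarS : variance (∑ i, B i) P ≤ n := by
    rw [IndepFun.variance_sum (fun i _ => hmem i) (by
      intro i hi j hj hij
      exact hpair (Set.mem_univ i) (Set.mem_univ j) hij)]
    calc ∑ i, variance (B i) P ≤ ∑ _i : Fin n, (1 : ℝ) := Finset.sum_le_sum fun i _ => hvar i
      _ = n := by simp
  have hES : ∫ ω, ∑ i, B i ω ∂P = n * p := by
    rw [integral_finset_sum _ fun i _ => (hmem i).integrable one_le_two]
    simp [hp]
  have hcheb := meas_ge_le_variance_div_sq (μ := P) hmemS ha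
  have hsetle : {ω | a ≤ |(∑ i, B i ω) - n * p|}
      ⊆ {ω | a ≤ |(∑ i, B i) ω - ∫ ω', (∑ i, B i) ω' ∂P|} := by
    intro ω hω
    simp only [Set.mem_setOf_eq, Finset.sum_apply, hES]
    exact hω
  calc P {ω | a ≤ |(∑ i, B i ω) - n * p|} ≤ _ := measure_mono hsetle
    _ ≤ ENNReal.ofReal (variance (∑ i, B i) P / a ^ 2) := hcheb
    _ ≤ ENNReal.ofReal (n / a ^ 2) := by
        apply ENNReal.ofReal_le_ofReal
        exact (div_le_div_iff_of_pos_right (by positivity)).mpr hvarS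
set_option maxHeartbeats 2000000 in
/-- (Theorem 2, first claim: asymptotic optimality of the CIR threshold.) For each `n ≥ 1`,
let `(X_1,Y_1), …, (X_n,Y_n), (X,Y)` be i.i.d. pairs in `ℝ^d × ℝ` with common law `μ`, and
let `F(y|x)` be a regular conditional CDF of `Y` given `X = x` (the canonical one `condCDF μ`).
Let `ρ_n ∈ (0,1)`, `ρ_n → 0`, `T_n = ⌈ρ_n⁻¹⌉`, and fix measurable monotone estimated quantile
functions `q̂_0 ≤ … ≤ q̂_{T_n}` satisfying the consistency condition
`max_{0 ≤ t ≤ T_n} E[(t/T_n - F(q̂_t(X)|X))²] ≤ ρ_n²`. Fix measurable shortest-interval index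
functions `l_k : ℝ^d → {0,…,T_n-k}`, let `C_k(x) = (q̂_{l_k(x)}(x), q̂_{l_k(x)+k}(x)]`, and
assume nestedness `C_k(x) ⊆ C_{k+1}(x)` (unimodality). Let `α ∈ (0,1)`, let
`k_i = min {k : Y_i ∈ C_k(X_i)}` (with `k_i = T_n` if `Y_i ∉ C_{T_n}(X_i)`), and let `k̂_n`
be the `⌈(1-α)(n+1)⌉`-th smallest value among `k_1, …, k_n`. Then `k̂_n / T_n → 1 - α` in
probability: for every `ε > 0`, `lim_{n→∞} P[|k̂_n / T_n - (1 - α)| > ε] = 0`. -/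
theorem cir_threshold_asymptotic_optimality
    {Ω : Type*} [MeasurableSpace Ω] (P : Measure Ω) [IsProbabilityMeasure P]
    (d : ℕ)
    (X : (n : ℕ) → Fin (n + 1) → Ω → (Fin d → ℝ))
    (Y : (n : ℕ) → Fin (n + 1) → Ω → ℝ)
    (μ : Measure ((Fin d → ℝ) × ℝ)) [IsProbabilityMeasure μ]
    (hmeas : ∀ n i, Measurable fun ω => (X n i ω, Y n i ω))
    (hident : ∀ n i, P.map (fun ω => (X n i ω, Y n i ω)) = μ)
    (hindep : ∀ n, 1 ≤ n →
      iIndepFun (fun (i : Fin (n + 1)) ω => (X n i ω, Y n i ω)) P)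
    (F : (Fin d → ℝ) → ℝ → ℝ)
    (hF : ∀ x y, F x y = condCDF μ x y)
    (ρ : ℕ → ℝ) (hρ : ∀ n, ρ n ∈ Set.Ioo (0 : ℝ) 1)
    (hρ0 : Tendsto ρ atTop (nhds 0))
    (T : ℕ → ℕ) (hT : ∀ n, T n = ⌈(ρ n)⁻¹⌉₊)
    (q : (n : ℕ) → ℕ → (Fin d → ℝ) → ℝ)
    (hqmeas : ∀ n t, t ≤ T n → Measurable (q n t))
    (hqmono : ∀ n t, t < T n → ∀ x, q n t x ≤ q n (t + 1) x)
    (hconsist : ∀ n, 1 ≤ n → ∀ t, t ≤ T n →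
      (∫ x, ((t : ℝ) / (T n) - F x (q n t x)) ^ 2 ∂μ.fst) ≤ (ρ n) ^ 2)
    (l : (n : ℕ) → ℕ → (Fin d → ℝ) → ℕ)
    (hlmeas : ∀ n k, 1 ≤ k → k ≤ T n → Measurable (l n k))
    (hlrange : ∀ n k, 1 ≤ k → k ≤ T n → ∀ x, l n k x + k ≤ T n)
    (hlopt : ∀ n k, 1 ≤ k → k ≤ T n → ∀ x, ∀ l' : ℕ, l' + k ≤ T n →
      q n (l n k x + k) x - q n (l n k x) x ≤ q n (l' + k) x - q n l' x)
    (C : (n : ℕ) → ℕ → (Fin d → ℝ) → Set ℝ)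
    (hC : ∀ n k x, C n k x = Set.Ioc (q n (l n k x) x) (q n (l n k x + k) x))
    (hnested : ∀ n k, 1 ≤ k → k < T n → ∀ x, C n k x ⊆ C n (k + 1) x)
    (α : ℝ) (hα : α ∈ Set.Ioo (0 : ℝ) 1)
    (ki : (n : ℕ) → Fin n → Ω → ℕ)
    (hki₁ : ∀ n (i : Fin n) ω,
      Y n i.castSucc ω ∈ C n (T n) (X n i.castSucc ω) →
        ki n i ω = sInf {k | 1 ≤ k ∧ Y n i.castSucc ω ∈ C n k (X n i.castSucc ω)})
    (hki₂ : ∀ n (i : Fin n) ω,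
      Y n i.castSucc ω ∉ C n (T n) (X n i.castSucc ω) → ki n i ω = T n)
    (khat : (n : ℕ) → Ω → ℕ)
    (hkhat : ∀ n ω, khat n ω =
      orderStat ⌈(1 - α) * (n + 1)⌉₊ (List.ofFn fun i : Fin n => ki n i ω)) :
    ∀ ε : ℝ, 0 < ε →
      Tendsto (fun n => P {ω | ε < |(khat n ω : ℝ) / (T n) - (1 - α)|})
        atTop (nhds 0) := by
  intro ε hε
  obtain ⟨hα0, hα1⟩ := hα
  have hρpos : ∀ m, 0 < ρ m := fun m => (hρ m).1
  have hT1 : ∀ m, 1 ≤ T m := fun m => by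
    rw [hT m]
    exact Nat.one_le_iff_ne_zero.mpr (Nat.pos_iff_ne_zero.mp
      (Nat.ceil_pos.mpr (inv_pos.mpr (hρpos m))))
  have hTr : ∀ m, (0:ℝ) < T m := fun m => by exact_mod_cast hT1 m
  have hTinv : ∀ m, (ρ m)⁻¹ ≤ (T m : ℝ) := fun m => by rw [hT m]; exact Nat.le_ceil _
  have hTtop : Tendsto (fun m => (T m : ℝ)) atTop atTop := by
    refine tendsto_atTop_mono hTinv ?_
    have h1 : Tendsto ρ atTop (nhdsWithin 0 (Set.Ioi 0)) :=
      tendsto_nhdsWithin_iff.mpr ⟨hρ0, Filter.Eventually.of_forall fun m => hρpos m⟩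
    exact tendsto_inv_nhdsGT_zero.comp h1
  have hδ0 : Tendsto (fun m => 2 * Real.sqrt (ρ m + 2 * ρ m ^ 2)) atTop (nhds 0) := by
    have h1 : Tendsto (fun m => ρ m + 2 * ρ m ^ 2) atTop (nhds 0) := by
      have h2 : Tendsto (fun m => ρ m ^ 2) atTop (nhds 0) := by
        simpa using hρ0.pow 2
      simpa using hρ0.add (h2.const_mul 2)
    have h3 := (Real.continuous_sqrt.tendsto 0).comp h1
    simpa using h3.const_mul 2
  have key : ∀ n : ℕ, 1 ≤ n → 1 ≤ α * ((n:ℝ)+1) →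
      2 * Real.sqrt (ρ n + 2 * ρ n ^ 2) ≤ ε/8 → 1/(T n : ℝ) ≤ ε/8 →
      4 ≤ (n:ℝ) * ε → 1 ≤ ε * (T n : ℝ) →
      (0 < 1 - α - ε → 1 ≤ (1 - α - ε) * (T n : ℝ)) →
      P {ω | ε < |(khat n ω : ℝ) / (T n) - (1 - α)|}
        ≤ ENNReal.ofReal (8/((n:ℝ) * ε^2)) := by
    intro n h1n h2n h3n h4n h5n h6n h7n
    classical
    have hT1n : 1 ≤ T n := hT1 n
    have hTrn : (0:ℝ) < T n := hTr n
    have hn0 : (0:ℝ) < n := by exact_mod_cast h1n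
    -- the target sets in product space
    set A : ℕ → Set ((Fin d → ℝ) × ℝ) := fun k => {z | z.2 ∈ C n k z.1} with hA_def
    -- measurability of the quantile endpoint functions
    have haqmeas : ∀ k, 1 ≤ k → k ≤ T n → Measurable (fun x => q n (l n k x) x) := by
      intro k hk1 hk2
      exact measurable_comp_nat (hlmeas n k hk1 hk2) (fun j hj => hqmeas n j hj)
        (fun x => by have := hlrange n k hk1 hk2 x; omega)
    have hbqmeas : ∀ k, 1 ≤ k → k ≤ T n → Measurable (fun x => q n (l n k x + k) x) := by
      intro k hk1 hk2
      exact measurable_comp_nat (f := l n k) (g := fun j x => q n (j + k) x) (m := T n - k)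
        (hlmeas n k hk1 hk2) (fun j hj => hqmeas n (j + k) (by omega))
        (fun x => by have := hlrange n k hk1 hk2 x; omega)
    have hqmono' : ∀ s t, s ≤ t → t ≤ T n → ∀ x, q n s x ≤ q n t x := by
      intro s t hst
      induction t, hst using Nat.le_induction with
      | base => intro _ x; exact le_rfl
      | succ t ht ih =>
        intro htT x
        exact le_trans (ih (by omega) x) (hqmono n t (by omega) x)
    have hAmeas : ∀ k, 1 ≤ k → k ≤ T n → MeasurableSet (A k) := by
      intro k hk1 hk2
      have heq : A k = {z : (Fin d → ℝ) × ℝ | (fun x => q n (l n k x) x) z.1 < z.2}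
          ∩ {z : (Fin d → ℝ) × ℝ | z.2 ≤ (fun x => q n (l n k x + k) x) z.1} := by
        ext z
        simp [hA_def, hC n k, Set.mem_Ioc]
      rw [heq]
      exact (measurableSet_lt ((haqmeas k hk1 hk2).comp measurable_fst) measurable_snd).inter
        (measurableSet_le measurable_snd ((hbqmeas k hk1 hk2).comp measurable_fst))
    -- Claim A : accuracy of coverage probabilities
    have claimA : ∀ k, 1 ≤ k → k ≤ T n →
        |(μ (A k)).toReal - (k:ℝ)/(T n)| ≤ 2 * Real.sqrt (ρ n + 2 * ρ n ^ 2) := by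
      -- integrability of centered conditional CDF compositions
      have hvmeas : ∀ (c : (Fin d → ℝ) → ℕ), Measurable c → (∀ x, c x ≤ T n) →
          Measurable (fun x => condCDF μ x (q n (c x) x) - (c x : ℝ)/(T n)) := by
        intro c hc hcT
        exact (measurable_condCDF_comp μ
          (measurable_comp_nat hc (fun j hj => hqmeas n j hj) hcT)).sub
          ((measurable_from_nat.comp hc).div_const _)
      have hvbd : ∀ (c : (Fin d → ℝ) → ℕ), (∀ x, c x ≤ T n) →
          ∀ x, |condCDF μ x (q n (c x) x) - (c x : ℝ)/(T n)| ≤ 1 := by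
        intro c hcT x
        have h1 := condCDF_nonneg μ x (q n (c x) x)
        have h2 := condCDF_le_one μ x (q n (c x) x)
        have h3 : 0 ≤ (c x : ℝ)/(T n) := by positivity
        have h4 : (c x : ℝ)/(T n) ≤ 1 := by
          rw [div_le_one hTrn]; exact_mod_cast hcT x
        rw [abs_le]; constructor <;> linarith
      have hvmem : ∀ (c : (Fin d → ℝ) → ℕ), Measurable c → (∀ x, c x ≤ T n) →
          MemLp (fun x => condCDF μ x (q n (c x) x) - (c x : ℝ)/(T n)) 2 μ.fst := by
        intro c hc hcT
        exact (memLp_top_of_bound (hvmeas c hc hcT).aestronglyMeasurable 1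
          (Filter.Eventually.of_forall (by simpa using hvbd c hcT))).mono_exponent le_top
      have hintsq : ∀ t, t ≤ T n → Integrable
          (fun x => ((t:ℝ)/(T n) - condCDF μ x (q n t x))^2) μ.fst := by
        intro t ht
        have hm2 : Measurable (fun x => ((t:ℝ)/(T n) - condCDF μ x (q n t x))^2) :=
          (measurable_const.sub (measurable_condCDF_comp μ (hqmeas n t ht))).pow_const 2
        refine Integrable.mono' (integrable_const (1:ℝ)) hm2.aestronglyMeasurable
          (Filter.Eventually.of_forall fun x => ?_)
        have h1 := condCDF_nonneg μ x (q n t x)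
        have h2 := condCDF_le_one μ x (q n t x)
        have h3 : 0 ≤ (t : ℝ)/(T n) := by positivity
        have h4 : (t : ℝ)/(T n) ≤ 1 := by rw [div_le_one hTrn]; exact_mod_cast ht
        rw [Real.norm_eq_abs, abs_le]
        constructor <;> nlinarith
      -- the key variance-style bound
      have hvbound : ∀ (c : (Fin d → ℝ) → ℕ), Measurable c → (∀ x, c x ≤ T n) →
          |∫ x, (condCDF μ x (q n (c x) x) - (c x : ℝ)/(T n)) ∂μ.fst|
            ≤ Real.sqrt (((T n:ℝ)+1) * ρ n ^ 2) := by
        intro c hc hcT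
        have hmem := hvmem c hc hcT
        have hvar : (∫ x, (condCDF μ x (q n (c x) x) - (c x : ℝ)/(T n)) ∂μ.fst)^2
            ≤ ∫ x, (condCDF μ x (q n (c x) x) - (c x : ℝ)/(T n))^2 ∂μ.fst := by
          have h3 := variance_nonneg (fun x => condCDF μ x (q n (c x) x) - (c x : ℝ)/(T n)) μ.fst
          rw [variance_eq_sub hmem] at h3
          have h4 : (fun x => condCDF μ x (q n (c x) x) - (c x : ℝ)/(T n)) ^ 2
              = fun x => (condCDF μ x (q n (c x) x) - (c x : ℝ)/(T n))^2 := by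
            funext x; simp [Pi.pow_apply]
          rw [h4] at h3
          linarith
        have hsq : ∫ x, (condCDF μ x (q n (c x) x) - (c x : ℝ)/(T n))^2 ∂μ.fst
            ≤ ((T n:ℝ)+1) * ρ n ^ 2 := by
          calc ∫ x, (condCDF μ x (q n (c x) x) - (c x : ℝ)/(T n))^2 ∂μ.fst
              ≤ ∫ x, (∑ t ∈ Finset.range (T n + 1),
                  ((t:ℝ)/(T n) - condCDF μ x (q n t x))^2) ∂μ.fst := by
                refine integral_mono hmem.integrable_sq (integrable_finset_sum _ fun t ht =>
                  hintsq t (by simpa [Nat.lt_succ_iff] using Finset.mem_range.mp ht)) ?_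
                intro x
                dsimp only
                have heq : (condCDF μ x (q n (c x) x) - (c x : ℝ)/(T n))^2
                    = ((c x:ℝ)/(T n) - condCDF μ x (q n (c x) x))^2 := by ring
                rw [heq]
                exact Finset.single_le_sum
                  (f := fun t : ℕ => ((t:ℝ)/(T n) - condCDF μ x (q n t x))^2)
                  (fun t _ => sq_nonneg _)
                  (Finset.mem_range.mpr (Nat.lt_succ_of_le (hcT x)))
            _ = ∑ t ∈ Finset.range (T n + 1),
                  ∫ x, ((t:ℝ)/(T n) - condCDF μ x (q n t x))^2 ∂μ.fst :=
                integral_finset_sum _ fun t ht =>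
                  hintsq t (by simpa [Nat.lt_succ_iff] using Finset.mem_range.mp ht)
            _ ≤ ∑ _t ∈ Finset.range (T n + 1), ρ n ^2 := by
                refine Finset.sum_le_sum fun t ht => ?_
                have h2 : (fun x => ((t:ℝ)/(T n) - condCDF μ x (q n t x))^2)
                    = fun x => ((t:ℝ)/(T n) - F x (q n t x))^2 := by
                  funext x; rw [hF]
                rw [h2]
                exact hconsist n h1n t (by simpa [Nat.lt_succ_iff] using Finset.mem_range.mp ht)
            _ = ((T n:ℝ)+1) * ρ n ^ 2 := by
                rw [Finset.sum_const, Finset.card_range]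
                push_cast
                ring
        calc |∫ x, (condCDF μ x (q n (c x) x) - (c x : ℝ)/(T n)) ∂μ.fst|
            = Real.sqrt ((∫ x, (condCDF μ x (q n (c x) x) - (c x : ℝ)/(T n)) ∂μ.fst)^2) :=
              (Real.sqrt_sq_eq_abs _).symm
          _ ≤ Real.sqrt (((T n:ℝ)+1) * ρ n ^ 2) := Real.sqrt_le_sqrt (le_trans hvar hsq)
      -- main part
      intro k hk1 hkT
      have hlm := hlmeas n k hk1 hkT
      have hFb : Measurable (fun x => condCDF μ x (q n (l n k x + k) x)) :=
        measurable_condCDF_comp μ (hbqmeas k hk1 hkT)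
      have hFa : Measurable (fun x => condCDF μ x (q n (l n k x) x)) :=
        measurable_condCDF_comp μ (haqmeas k hk1 hkT)
      have hG0 : ∀ x, 0 ≤ condCDF μ x (q n (l n k x + k) x) - condCDF μ x (q n (l n k x) x) :=
        fun x => sub_nonneg.mpr ((condCDF μ x).mono (hqmono' _ _ (Nat.le_add_right _ _)
          (hlrange n k hk1 hkT x) x))
      have hμA : μ (A k) = ∫⁻ x, ENNReal.ofReal (condCDF μ x (q n (l n k x + k) x)
          - condCDF μ x (q n (l n k x) x)) ∂μ.fst := by
        rw [measure_eq_lintegral_condCDF μ (hAmeas k hk1 hkT)]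
        congr 1
        funext x
        have hsec : {y | (x, y) ∈ A k} = Set.Ioc (q n (l n k x) x) (q n (l n k x + k) x) := by
          ext y; simp [hA_def, hC n k]
        rw [hsec, StieltjesFunction.measure_Ioc]
      have hp_int : (μ (A k)).toReal = ∫ x, (condCDF μ x (q n (l n k x + k) x)
          - condCDF μ x (q n (l n k x) x)) ∂μ.fst := by
        rw [hμA]
        exact (integral_eq_lintegral_of_nonneg_ae (Filter.Eventually.of_forall hG0)
          (hFb.sub hFa).aestronglyMeasurable).symm
      have hcT1 : ∀ x, l n k x + k ≤ T n := fun x => hlrange n k hk1 hkT x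
      have hcT2 : ∀ x, l n k x ≤ T n := fun x => by have := hlrange n k hk1 hkT x; omega
      have hint1 : Integrable
          (fun x => condCDF μ x (q n (l n k x + k) x) - ((l n k x + k : ℕ) : ℝ)/(T n)) μ.fst :=
        (hvmem (fun x => l n k x + k) (hlm.add_const k) hcT1).integrable one_le_two
      have hint2 : Integrable
          (fun x => condCDF μ x (q n (l n k x) x) - ((l n k x : ℕ) : ℝ)/(T n)) μ.fst :=
        (hvmem (l n k) hlm hcT2).integrable one_le_two
      have hexp : (fun x => condCDF μ x (q n (l n k x + k) x) - condCDF μ x (q n (l n k x) x))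
          = fun x => ((condCDF μ x (q n (l n k x + k) x) - ((l n k x + k : ℕ):ℝ)/(T n))
            - (condCDF μ x (q n (l n k x) x) - ((l n k x : ℕ):ℝ)/(T n))) + (k:ℝ)/(T n) := by
        funext x
        push_cast
        ring
      have hGint_eq : ∫ x, (condCDF μ x (q n (l n k x + k) x)
            - condCDF μ x (q n (l n k x) x)) ∂μ.fst
          = (∫ x, (condCDF μ x (q n (l n k x + k) x) - ((l n k x + k : ℕ):ℝ)/(T n)) ∂μ.fst)
            - (∫ x, (condCDF μ x (q n (l n k x) x) - ((l n k x : ℕ):ℝ)/(T n)) ∂μ.fst)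
            + (k:ℝ)/(T n) := by
        have hsub12 : Integrable (fun x => (condCDF μ x (q n (l n k x + k) x)
            - ((l n k x + k : ℕ):ℝ)/(T n))
            - (condCDF μ x (q n (l n k x) x) - ((l n k x : ℕ):ℝ)/(T n))) μ.fst :=
          hint1.sub hint2
        rw [hexp, integral_add hsub12 (integrable_const _),
          integral_sub hint1 hint2, integral_const]
        simp
      have hv1 := hvbound (fun x => l n k x + k) (hlm.add_const k) hcT1
      have hv2 := hvbound (l n k) hlm hcT2
      have hstep : |(μ (A k)).toReal - (k:ℝ)/(T n)| ≤ 2 * Real.sqrt (((T n:ℝ)+1) * ρ n ^ 2) := by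
        rw [hp_int, hGint_eq, add_sub_cancel_right]
        calc |(∫ x, (condCDF μ x (q n (l n k x + k) x) - ((l n k x + k : ℕ):ℝ)/(T n)) ∂μ.fst)
              - (∫ x, (condCDF μ x (q n (l n k x) x) - ((l n k x : ℕ):ℝ)/(T n)) ∂μ.fst)|
            ≤ |∫ x, (condCDF μ x (q n (l n k x + k) x) - ((l n k x + k : ℕ):ℝ)/(T n)) ∂μ.fst|
              + |∫ x, (condCDF μ x (q n (l n k x) x) - ((l n k x : ℕ):ℝ)/(T n)) ∂μ.fst| :=
              abs_sub _ _
          _ ≤ Real.sqrt (((T n:ℝ)+1) * ρ n ^ 2) + Real.sqrt (((T n:ℝ)+1) * ρ n ^ 2) :=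
              add_le_add hv1 hv2
          _ = 2 * Real.sqrt (((T n:ℝ)+1) * ρ n ^ 2) := (two_mul _).symm
      have hmono : Real.sqrt (((T n:ℝ)+1) * ρ n ^ 2) ≤ Real.sqrt (ρ n + 2 * ρ n ^ 2) := by
        apply Real.sqrt_le_sqrt
        have hTle : (T n:ℝ) ≤ (ρ n)⁻¹ + 1 := by
          rw [hT n]
          exact le_of_lt (Nat.ceil_lt_add_one (le_of_lt (inv_pos.mpr (hρpos n))))
        have hinv : (ρ n)⁻¹ * ρ n ^ 2 = ρ n := by
          rw [sq, ← mul_assoc, inv_mul_cancel₀ (ne_of_gt (hρpos n)), one_mul]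
        nlinarith [sq_nonneg (ρ n), hρpos n, hTle, hinv]
      linarith [hstep, hmono]

    -- nestedness chain
    have hchain : ∀ j k', 1 ≤ j → j ≤ k' → k' ≤ T n → ∀ x, C n j x ⊆ C n k' x := by
      intro j k' hj1 hjk
      induction k', hjk using Nat.le_induction with
      | base => intro _ x; exact subset_rfl
      | succ k' hk ih =>
        intro hk'T x
        exact subset_trans (ih (by omega) x) (hnested n k' (by omega) (by omega) x)
    -- properties of the scores ki
    have hki_le : ∀ (i : Fin n) ω, ki n i ω ≤ T n := by
      intro i ω
      by_cases hY : Y n i.castSucc ω ∈ C n (T n) (X n i.castSucc ω)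
      · rw [hki₁ n i ω hY]
        exact Nat.sInf_le ⟨hT1n, hY⟩
      · rw [hki₂ n i ω hY]
    have hki_iff : ∀ (c : ℕ), 1 ≤ c → c < T n → ∀ (i : Fin n) ω,
        (ki n i ω ≤ c ↔ (X n i.castSucc ω, Y n i.castSucc ω) ∈ A c) := by
      intro c hc1 hcT i ω
      constructor
      · intro h
        by_cases hY : Y n i.castSucc ω ∈ C n (T n) (X n i.castSucc ω)
        · rw [hki₁ n i ω hY] at h
          have hne : {k | 1 ≤ k ∧ Y n i.castSucc ω ∈ C n k (X n i.castSucc ω)}.Nonempty :=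
            ⟨T n, hT1n, hY⟩
          have hmem := Nat.sInf_mem hne
          exact hchain _ c hmem.1 h (le_of_lt hcT) _ hmem.2
        · rw [hki₂ n i ω hY] at h; omega
      · intro h
        have hY : Y n i.castSucc ω ∈ C n (T n) (X n i.castSucc ω) :=
          hchain c (T n) hc1 (le_of_lt hcT) le_rfl _ h
        rw [hki₁ n i ω hY]
        exact Nat.sInf_le ⟨hc1, h⟩
    -- counting function and indicator variables
    set B : ℕ → Fin n → Ω → ℝ := fun c i ω =>
      if (X n i.castSucc ω, Y n i.castSucc ω) ∈ A c then 1 else 0 with hB_def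
    set N : ℕ → Ω → ℕ := fun c ω =>
      ∑ i : Fin n, if (X n i.castSucc ω, Y n i.castSucc ω) ∈ A c then 1 else 0 with hN_def
    have hBsum : ∀ c ω, ∑ i : Fin n, B c i ω = (N c ω : ℝ) := by
      intro c ω
      rw [hN_def]
      push_cast
      refine Finset.sum_congr rfl fun i _ => ?_
      rw [hB_def]
    -- the quantile rank r
    have hr1 : 1 ≤ ⌈(1-α) * ((n:ℝ)+1)⌉₊ := Nat.one_le_iff_ne_zero.mpr (Nat.pos_iff_ne_zero.mp
      (Nat.ceil_pos.mpr (by nlinarith)))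
    have hrn : ⌈(1-α) * ((n:ℝ)+1)⌉₊ ≤ n := Nat.ceil_le.mpr (by nlinarith)
    have hr_le : (⌈(1-α) * ((n:ℝ)+1)⌉₊ : ℝ) < (1-α) * ((n:ℝ)+1) + 1 :=
      Nat.ceil_lt_add_one (by nlinarith)
    have hr_ge : (1-α) * ((n:ℝ)+1) ≤ (⌈(1-α) * ((n:ℝ)+1)⌉₊ : ℝ) := Nat.le_ceil _
    -- order statistic characterization
    have hcount : ∀ (c : ℕ), 1 ≤ c → c < T n → ∀ ω,
        (khat n ω ≤ c ↔ ⌈(1-α) * ((n:ℝ)+1)⌉₊ ≤ N c ω) := by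
      intro c hc1 hcT ω
      rw [hkhat n ω, orderStat_le_iff hr1 (by rw [List.length_ofFn]; exact hrn) c,
        countP_ofFn, hN_def]
      constructor
      · intro h
        refine le_trans h (le_of_eq (Finset.sum_congr rfl fun i _ => ?_))
        simp only [decide_eq_true_eq]
        rw [if_congr (hki_iff c hc1 hcT i ω) rfl rfl]
      · intro h
        refine le_trans h (le_of_eq (Finset.sum_congr rfl fun i _ => ?_))
        simp only [decide_eq_true_eq]
        rw [if_congr (hki_iff c hc1 hcT i ω).symm rfl rfl]
    have hkhat_le : ∀ ω, khat n ω ≤ T n := by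
      intro ω
      rw [hkhat n ω]
      refine orderStat_le_of_forall fun a ha => ?_
      obtain ⟨i, rfl⟩ := List.mem_ofFn.mp ha
      exact hki_le i ω
    -- properties of the indicators B
    have hBmeas : ∀ c, 1 ≤ c → c ≤ T n → ∀ i, Measurable (B c i) := by
      intro c hc1 hcT i
      rw [hB_def]
      exact Measurable.ite ((hmeas n i.castSucc) (hAmeas c hc1 hcT)) measurable_const
        measurable_const
    have hBval : ∀ c (i : Fin n) ω, B c i ω = 0 ∨ B c i ω = 1 := by
      intro c i ω
      by_cases h : (X n i.castSucc ω, Y n i.castSucc ω) ∈ A c <;> simp [hB_def, h]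
    have hBpair : ∀ c, 1 ≤ c → c ≤ T n →
        Set.Pairwise Set.univ (fun i j : Fin n => IndepFun (B c i) (B c j) P) := by
      intro c hc1 hcT i _ j _ hij
      have hind := (hindep n h1n).indepFun
        (show i.castSucc ≠ j.castSucc by simpa [Fin.castSucc_inj] using hij)
      have hφ : Measurable (fun z : (Fin d → ℝ) × ℝ => if z ∈ A c then (1:ℝ) else 0) :=
        Measurable.ite (hAmeas c hc1 hcT) measurable_const measurable_const
      exact hind.comp hφ hφ
    have hBint : ∀ c, 1 ≤ c → c ≤ T n → ∀ i, ∫ ω, B c i ω ∂P = (μ (A c)).toReal := by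
      intro c hc1 hcT i
      have hpre : B c i = fun ω => Set.indicator
          ((fun ω => (X n i.castSucc ω, Y n i.castSucc ω)) ⁻¹' (A c)) (fun _ => (1:ℝ)) ω := by
        funext ω
        rw [hB_def]
        simp [Set.indicator_apply, Set.mem_preimage]
      rw [hpre, integral_indicator_const (1:ℝ)
        ((hmeas n i.castSucc) (hAmeas c hc1 hcT))]
      rw [measureReal_def, show P ((fun ω => (X n i.castSucc ω, Y n i.castSucc ω)) ⁻¹' (A c)) = μ (A c) by
        rw [← hident n i.castSucc, Measure.map_apply (hmeas n i.castSucc) (hAmeas c hc1 hcT)]]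
      simp
    -- decomposition of the bad event
    have habs : {ω | ε < |(khat n ω : ℝ) / (T n) - (1 - α)|}
        ⊆ {ω | (1-α+ε) * (T n:ℝ) < (khat n ω : ℝ)}
          ∪ {ω | (khat n ω : ℝ) < (1-α-ε) * (T n:ℝ)} := by
      intro ω hω
      simp only [Set.mem_setOf_eq, Set.mem_union] at hω ⊢
      rcases lt_abs.mp hω with h | h
      · left
        have h2 : (1-α+ε) < (khat n ω : ℝ) / (T n:ℝ) := by linarith
        calc (1-α+ε) * (T n:ℝ) < ((khat n ω : ℝ) / (T n:ℝ)) * (T n:ℝ) :=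
              mul_lt_mul_of_pos_right h2 hTrn
          _ = (khat n ω : ℝ) := div_mul_cancel₀ _ (ne_of_gt hTrn)
      · right
        have h2 : (khat n ω : ℝ) / (T n:ℝ) < (1-α-ε) := by linarith
        calc (khat n ω : ℝ) = ((khat n ω : ℝ) / (T n:ℝ)) * (T n:ℝ) :=
              (div_mul_cancel₀ _ (ne_of_gt hTrn)).symm
          _ < (1-α-ε) * (T n:ℝ) := mul_lt_mul_of_pos_right h2 hTrn
    have hane : (0:ℝ) < (n:ℝ)*ε/2 := div_pos (mul_pos hn0 hε) two_pos
    -- upper deviation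
    have hUbound : P {ω | (1-α+ε) * (T n:ℝ) < (khat n ω : ℝ)}
        ≤ ENNReal.ofReal (4/((n:ℝ) * ε^2)) := by
      by_cases hβ : 1 - α + ε < 1
      · set kp := ⌊(1 - α + ε) * (T n:ℝ)⌋₊ with hkp_def
        have hkp1 : 1 ≤ kp := by
          apply Nat.le_floor
          push_cast
          nlinarith [h6n, hTrn]
        have hkple : (kp:ℝ) ≤ (1-α+ε) * (T n:ℝ) := Nat.floor_le (by nlinarith [hTrn, hε, hα1])
        have hkpT : kp < T n := by
          have h2 : (kp:ℝ) < (T n:ℝ) := by nlinarith [hTrn]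
          exact_mod_cast h2
        have hpA := claimA kp hkp1 (le_of_lt hkpT)
        have hkpge : (1-α+ε) * (T n:ℝ) - 1 ≤ (kp:ℝ) := le_of_lt (Nat.sub_one_lt_floor _)
        have hplow : 1 - α + ε - ε/4 ≤ (μ (A kp)).toReal := by
          have h2 := abs_le.mp (le_trans hpA h3n)
          have h3 : (1-α+ε) - 1/(T n:ℝ) ≤ (kp:ℝ)/(T n:ℝ) := by
            rw [show (1-α+ε) - 1/(T n:ℝ) = ((1-α+ε) * (T n:ℝ) - 1)/(T n:ℝ) by field_simp]
            exact (div_le_div_iff_of_pos_right hTrn).mpr hkpge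
          linarith [h4n]
        have hsub2 : {ω | (1-α+ε) * (T n:ℝ) < (khat n ω : ℝ)}
            ⊆ {ω | (n:ℝ)*ε/2 ≤ |(∑ i : Fin n, B kp i ω) - n * (μ (A kp)).toReal|} := by
          intro ω hω
          simp only [Set.mem_setOf_eq] at hω ⊢
          have h5 : ¬ (khat n ω ≤ kp) := by
            intro hle
            have h6 : (khat n ω : ℝ) ≤ kp := Nat.cast_le.mpr hle
            linarith
          rw [hcount kp hkp1 hkpT ω] at h5
          push_neg at h5
          have h7 : (N kp ω : ℝ) ≤ (⌈(1-α) * ((n:ℝ)+1)⌉₊:ℝ) - 1 := by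
            have h9 : N kp ω + 1 ≤ ⌈(1-α) * ((n:ℝ)+1)⌉₊ := h5
            have h10 : ((N kp ω + 1 : ℕ) : ℝ) ≤ (⌈(1-α) * ((n:ℝ)+1)⌉₊:ℝ) := Nat.cast_le.mpr h9
            push_cast at h10
            linarith
          rw [hBsum kp ω]
          have h8 : (n:ℝ)*ε/2 ≤ (n:ℝ)*(μ (A kp)).toReal - (N kp ω:ℝ) := by
            nlinarith [mul_le_mul_of_nonneg_left hplow hn0.le, h7, hr_le, h5n, hα0, hn0]
          calc (n:ℝ)*ε/2 ≤ (n:ℝ)*(μ (A kp)).toReal - (N kp ω:ℝ) := h8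
            _ ≤ |(N kp ω:ℝ) - (n:ℝ)*(μ (A kp)).toReal| := by
                rw [abs_sub_comm]; exact le_abs_self _
        calc P {ω | (1-α+ε) * (T n:ℝ) < (khat n ω : ℝ)}
            ≤ P {ω | (n:ℝ)*ε/2 ≤ |(∑ i : Fin n, B kp i ω) - n * (μ (A kp)).toReal|} :=
              measure_mono hsub2
          _ ≤ ENNReal.ofReal ((n:ℝ)/((n:ℝ)*ε/2)^2) :=
              binom_concentration P (hBmeas kp hkp1 (le_of_lt hkpT)) (hBval kp)
                (hBpair kp hkp1 (le_of_lt hkpT)) (hBint kp hkp1 (le_of_lt hkpT)) hane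
          _ = ENNReal.ofReal (4/((n:ℝ) * ε^2)) := by
              congr 1
              rw [div_eq_div_iff (by positivity) (by positivity)]
              ring
      · have hempty : {ω | (1-α+ε) * (T n:ℝ) < (khat n ω : ℝ)} = ∅ := by
          rw [Set.eq_empty_iff_forall_notMem]
          intro ω hω
          simp only [Set.mem_setOf_eq] at hω
          have h2 : (khat n ω : ℝ) ≤ (T n : ℝ) := Nat.cast_le.mpr (hkhat_le ω)
          nlinarith [not_lt.mp hβ, hTrn]
        rw [hempty]
        simp
    -- lower deviation
    have hVbound : P {ω | (khat n ω : ℝ) < (1-α-ε) * (T n:ℝ)}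
        ≤ ENNReal.ofReal (4/((n:ℝ) * ε^2)) := by
      by_cases hγ : 0 < 1 - α - ε
      · set km := ⌊(1 - α - ε) * (T n:ℝ)⌋₊ with hkm_def
        have hkm1 : 1 ≤ km := Nat.le_floor (by push_cast; exact h7n hγ)
        have hkmle : (km:ℝ) ≤ (1-α-ε) * (T n:ℝ) := Nat.floor_le (by nlinarith [hTrn])
        have hkmT : km < T n := by
          have h2 : (km:ℝ) < (T n:ℝ) := by nlinarith [hTrn, hε, hα0]
          exact_mod_cast h2
        have hpA := claimA km hkm1 (le_of_lt hkmT)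
        have hphigh : (μ (A km)).toReal ≤ 1 - α - ε + ε/8 := by
          have h2 := abs_le.mp (le_trans hpA h3n)
          have h3 : (km:ℝ)/(T n:ℝ) ≤ 1-α-ε := by
            rw [div_le_iff₀ hTrn]
            exact hkmle
          linarith
        have hsub2 : {ω | (khat n ω : ℝ) < (1-α-ε) * (T n:ℝ)}
            ⊆ {ω | (n:ℝ)*ε/2 ≤ |(∑ i : Fin n, B km i ω) - n * (μ (A km)).toReal|} := by
          intro ω hω
          simp only [Set.mem_setOf_eq] at hω ⊢
          have h5 : khat n ω ≤ km := Nat.le_floor (le_of_lt hω)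
          rw [hcount km hkm1 hkmT ω] at h5
          have h7 : (⌈(1-α) * ((n:ℝ)+1)⌉₊:ℝ) ≤ (N km ω:ℝ) := Nat.cast_le.mpr h5
          rw [hBsum km ω]
          have h8 : (n:ℝ)*ε/2 ≤ (N km ω:ℝ) - (n:ℝ)*(μ (A km)).toReal := by
            nlinarith [mul_le_mul_of_nonneg_left hphigh hn0.le, h7, hr_ge, h5n, hα1, hn0]
          exact le_trans h8 (le_abs_self _)
        calc P {ω | (khat n ω : ℝ) < (1-α-ε) * (T n:ℝ)}
            ≤ P {ω | (n:ℝ)*ε/2 ≤ |(∑ i : Fin n, B km i ω) - n * (μ (A km)).toReal|} :=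
              measure_mono hsub2
          _ ≤ ENNReal.ofReal ((n:ℝ)/((n:ℝ)*ε/2)^2) :=
              binom_concentration P (hBmeas km hkm1 (le_of_lt hkmT)) (hBval km)
                (hBpair km hkm1 (le_of_lt hkmT)) (hBint km hkm1 (le_of_lt hkmT)) hane
          _ = ENNReal.ofReal (4/((n:ℝ) * ε^2)) := by
              congr 1
              rw [div_eq_div_iff (by positivity) (by positivity)]
              ring
      · have hempty : {ω | (khat n ω : ℝ) < (1-α-ε) * (T n:ℝ)} = ∅ := by
          rw [Set.eq_empty_iff_forall_notMem]
          intro ω hω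
          simp only [Set.mem_setOf_eq] at hω
          have h2 : (0:ℝ) ≤ (khat n ω : ℝ) := Nat.cast_nonneg _
          nlinarith [not_lt.mp hγ, hTrn]
        rw [hempty]
        simp
    calc P {ω | ε < |(khat n ω : ℝ) / (T n) - (1 - α)|}
        ≤ P ({ω | (1-α+ε) * (T n:ℝ) < (khat n ω : ℝ)}
            ∪ {ω | (khat n ω : ℝ) < (1-α-ε) * (T n:ℝ)}) := measure_mono habs
      _ ≤ P {ω | (1-α+ε) * (T n:ℝ) < (khat n ω : ℝ)}
            + P {ω | (khat n ω : ℝ) < (1-α-ε) * (T n:ℝ)} := measure_union_le _ _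
      _ ≤ ENNReal.ofReal (4/((n:ℝ) * ε^2)) + ENNReal.ofReal (4/((n:ℝ) * ε^2)) :=
            add_le_add hUbound hVbound
      _ = ENNReal.ofReal (8/((n:ℝ) * ε^2)) := by
            rw [← ENNReal.ofReal_add (by positivity) (by positivity)]
            congr 1
            ring



  have E2 : ∀ᶠ n : ℕ in atTop, 1 ≤ α * ((n:ℝ)+1) := by
    have h1 : Tendsto (fun n : ℕ => α * ((n:ℝ)+1)) atTop atTop :=
      (tendsto_atTop_add_const_right _ 1 tendsto_natCast_atTop_atTop).const_mul_atTop hα0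
    exact h1.eventually_ge_atTop 1
  have E3 : ∀ᶠ n : ℕ in atTop, 2 * Real.sqrt (ρ n + 2 * ρ n ^ 2) ≤ ε/8 :=
    (hδ0.eventually_lt_const (by positivity : (0:ℝ) < ε/8)).mono fun n h => le_of_lt h
  have E4 : ∀ᶠ n : ℕ in atTop, 1/(T n : ℝ) ≤ ε/8 := by
    have h1 : Tendsto (fun n => 1/(T n : ℝ)) atTop (nhds 0) := by
      simpa [one_div, Function.comp_def] using tendsto_inv_atTop_zero.comp hTtop
    exact (h1.eventually_lt_const (by positivity : (0:ℝ) < ε/8)).mono fun n h => le_of_lt h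
  have E5 : ∀ᶠ n : ℕ in atTop, 4 ≤ (n:ℝ) * ε :=
    (tendsto_natCast_atTop_atTop.atTop_mul_const hε).eventually_ge_atTop 4
  have E6 : ∀ᶠ n : ℕ in atTop, 1 ≤ ε * (T n : ℝ) :=
    (hTtop.const_mul_atTop hε).eventually_ge_atTop 1
  have E7 : ∀ᶠ n : ℕ in atTop, (0 < 1 - α - ε → 1 ≤ (1 - α - ε) * (T n : ℝ)) := by
    rcases le_or_gt (1 - α - ε) 0 with h | h
    · exact Filter.Eventually.of_forall fun n hpos => absurd hpos (not_lt.mpr h)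
    · exact ((hTtop.const_mul_atTop h).eventually_ge_atTop 1).mono fun n hn _ => hn
  have key2 : ∀ᶠ n : ℕ in atTop,
      P {ω | ε < |(khat n ω : ℝ) / (T n) - (1 - α)|} ≤ ENNReal.ofReal (8/((n:ℝ) * ε^2)) := by
    filter_upwards [eventually_ge_atTop 1, E2, E3, E4, E5, E6, E7] with n h1 h2 h3 h4 h5 h6 h7
    exact key n h1 h2 h3 h4 h5 h6 h7
  have hlim : Tendsto (fun n : ℕ => ENNReal.ofReal (8/((n:ℝ) * ε^2))) atTop (nhds 0) := by
    have h1 : Tendsto (fun n : ℕ => 8/((n:ℝ) * ε^2)) atTop (nhds 0) := by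
      have h2 : (fun n : ℕ => 8/((n:ℝ) * ε^2)) = fun n : ℕ => (8/ε^2) * (1/(n:ℝ)) := by
        funext n
        simp only [div_eq_mul_inv, one_div, mul_inv]
        ring
      rw [h2]
      simpa using (tendsto_one_div_atTop_nhds_zero_nat (𝕜 := ℝ)).const_mul (8/ε^2)
    have h3 := ENNReal.tendsto_ofReal h1
    simpa using h3
  exact tendsto_of_tendsto_of_tendsto_of_le_of_le' tendsto_const_nhds hlim
    (Filter.Eventually.of_forall fun n => zero_le) key2
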